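/- Let 𝒪 and 𝒞 be finite nonempty sets and T ≥ 1 a horizon, with histories H_k = (O₁,…,O_k). Let π : ℝⁿ → History → 𝒞 → ℝ be a parametrized policy such that for every history H and action C, θ ↦ π_θ(C|H) is differentiable, π_θ(C|H) > 0, and ∑_{C∈𝒞} π_θ(C|H) = 1 for all θ; let P(O'|H,C) be a θ-independent transition kernel, ρ an initial distribution on 𝒪, r : 𝒪 → ℝ a reward, and λ ∈ ℝ. Define the trajectory probability Pr_θ[τ] = ρ(O₁) ∏_{k=1}^{T} π_θ(C_k|H_k) ∏_{k=1}^{T−1} P(O_{k+1}|H_k,C_k), the objective J(θ) = ∑_τ Pr_θ[τ] · ∑_{k=1}^{T} λ^{k−1} r(O_k), and the Q-function Q_θ(H_k,C_k) as the conditional expected value of ∑_{k'=k}^{T} λ^{k'−k} r(O_{k'}) given (H_k,C_k) under π_θ and P. Then J is differentiable in θ and ∇_θ J(θ) = ∑_τ Pr_θ[τ] · ∑_{k=1}^{T} λ^{k−1} · Q_θ(H_k,C_k) • ∇_θ log π_θ(C_k|H_k). -/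

import Mathlib

open Finset

/-- The history `H_k = (O₁, …, O_k)` of observations along the observation sequence `O`
up to (0-based) epoch `k`. -/
def hist {𝒪 : Type*} {T : ℕ} (O : Fin T → 𝒪) (k : Fin T) : List 𝒪 :=
  List.ofFn (fun i : Fin (k.1 + 1) =>
    O ⟨i.1, lt_of_le_of_lt (Nat.lt_succ_iff.mp i.2) k.2⟩)

/-- Probability, under policy `pol` and transition kernel `P`, of the continuation
(given as a list of observation–action pairs) of a trajectory after history `H` and
action `C`. -/
def contProb {𝒪 𝒞 : Type*} (pol : List 𝒪 → 𝒞 → ℝ) (P : List 𝒪 → 𝒞 → 𝒪 → ℝ) :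
    List 𝒪 → 𝒞 → List (𝒪 × 𝒞) → ℝ
  | _, _, [] => 1
  | H, C, (o', C') :: rest =>
      P H C o' * pol (H ++ [o']) C' * contProb pol P (H ++ [o']) C' rest

/-- Discounted reward `λ·r(o₁) + λ²·r(o₂) + ⋯` contributed by a list of future
observations. -/
def futReward {𝒪 : Type*} (r : 𝒪 → ℝ) (l : ℝ) : List 𝒪 → ℝ
  | [] => 0
  | o :: rest => l * (r o + futReward r l rest)

/-- The Q-function `Q(H_k, C_k)`: conditional expectation of the discounted reward-to-go
`∑_{k'=k}^{T} λ^{k'-k} r(O_{k'})` given the history `H` (ending in current observation `o`)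
and the action `C`, when `m = T - k` future epochs remain. -/
def Qfun {𝒪 𝒞 : Type*} [Fintype 𝒪] [Fintype 𝒞]
    (pol : List 𝒪 → 𝒞 → ℝ) (P : List 𝒪 → 𝒞 → 𝒪 → ℝ) (r : 𝒪 → ℝ) (l : ℝ)
    (m : ℕ) (H : List 𝒪) (o : 𝒪) (C : 𝒞) : ℝ :=
  r o + ∑ cont : Fin m → 𝒪 × 𝒞,
    contProb pol P H C (List.ofFn cont) * futReward r l (List.ofFn fun j => (cont j).1)

/-- The probability `Pr[τ] = ρ(O₁) ∏_{k=1}^{T} π(C_k|H_k) ∏_{k=1}^{T-1} P(O_{k+1}|H_k,C_k)`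
of a trajectory `τ = (O₁, C₁, …, O_T, C_T)`. -/
def trajProb {𝒪 𝒞 : Type*} [Fintype 𝒪] [Fintype 𝒞] {T : ℕ} (hT : 0 < T)
    (pol : List 𝒪 → 𝒞 → ℝ) (P : List 𝒪 → 𝒞 → 𝒪 → ℝ) (ρ : 𝒪 → ℝ)
    (τ : (Fin T → 𝒪) × (Fin T → 𝒞)) : ℝ :=
  ρ (τ.1 ⟨0, hT⟩) * (∏ k : Fin T, pol (hist τ.1 k) (τ.2 k)) *
    ∏ k : Fin T,
      if h : k.1 + 1 < T then P (hist τ.1 k) (τ.2 k) (τ.1 ⟨k.1 + 1, h⟩) else 1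

/-- The objective `J(θ) = ∑_τ Pr_θ[τ] · ∑_{k=1}^{T} λ^{k-1} r(O_k)`. -/
def Jobj {𝒪 𝒞 : Type*} [Fintype 𝒪] [Fintype 𝒞] {T n : ℕ} (hT : 0 < T)
    (polθ : (Fin n → ℝ) → List 𝒪 → 𝒞 → ℝ) (P : List 𝒪 → 𝒞 → 𝒪 → ℝ) (ρ : 𝒪 → ℝ)
    (r : 𝒪 → ℝ) (l : ℝ) (θ : Fin n → ℝ) : ℝ :=
  ∑ τ : (Fin T → 𝒪) × (Fin T → 𝒞),
    trajProb hT (polθ θ) P ρ τ * ∑ k : Fin T, l ^ (k.1) * r (τ.1 k)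

set_option linter.unusedSectionVars false
set_option maxHeartbeats 1000000

namespace PG
variable {𝒪 𝒞 : Type*} [Fintype 𝒪] [Fintype 𝒞] {n : ℕ}

lemma sum_fn_succ {X : Type*} [Fintype X] {M : Type*} [AddCommMonoid M] (m : ℕ)
    (F : (Fin (m+1) → X) → M) :
    ∑ f : Fin (m+1) → X, F f = ∑ x : X, ∑ g : Fin m → X, F (Fin.cons x g) := by
  rw [← (Fin.consEquiv (fun _ : Fin (m+1) => X)).sum_comp, Fintype.sum_prod_type]
  rfl

def obsL {m : ℕ} (f : Fin m → 𝒪 × 𝒞) : List 𝒪 := List.ofFn fun j => (f j).1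

lemma obsL_cons {m : ℕ} (x : 𝒪 × 𝒞) (g : Fin m → 𝒪 × 𝒞) :
    obsL (Fin.cons x g) = x.1 :: obsL g := by
  unfold obsL; rw [List.ofFn_succ]; simp

def tgtH (H : List 𝒪) {m : ℕ} (t : ℕ) (f : Fin m → 𝒪 × 𝒞) (h : t < m) : List 𝒪 :=
  H ++ List.ofFn fun i : Fin (t+1) =>
    (f ⟨i.1, Nat.lt_of_le_of_lt (Nat.lt_succ_iff.mp i.2) h⟩).1

def tgtO {m : ℕ} (t : ℕ) (f : Fin m → 𝒪 × 𝒞) (h : t < m) : 𝒪 := (f ⟨t, h⟩).1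
def tgtA {m : ℕ} (t : ℕ) (f : Fin m → 𝒪 × 𝒞) (h : t < m) : 𝒞 := (f ⟨t, h⟩).2

lemma tgtO_cons_zero {m : ℕ} (x : 𝒪 × 𝒞) (g : Fin m → 𝒪 × 𝒞) (h : 0 < m+1) :
    tgtO 0 (Fin.cons x g) h = x.1 := rfl
lemma tgtA_cons_zero {m : ℕ} (x : 𝒪 × 𝒞) (g : Fin m → 𝒪 × 𝒞) (h : 0 < m+1) :
    tgtA 0 (Fin.cons x g) h = x.2 := rfl
lemma tgtO_cons_succ {m t : ℕ} (x : 𝒪 × 𝒞) (g : Fin m → 𝒪 × 𝒞) (h : t+1 < m+1) :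
    tgtO (t+1) (Fin.cons x g) h = tgtO t g (by omega) := rfl
lemma tgtA_cons_succ {m t : ℕ} (x : 𝒪 × 𝒞) (g : Fin m → 𝒪 × 𝒞) (h : t+1 < m+1) :
    tgtA (t+1) (Fin.cons x g) h = tgtA t g (by omega) := rfl

lemma tgtH_cons_zero (H : List 𝒪) {m : ℕ} (x : 𝒪 × 𝒞) (g : Fin m → 𝒪 × 𝒞) (h : 0 < m+1) :
    tgtH H 0 (Fin.cons x g) h = H ++ [x.1] := by
  unfold tgtH; rw [List.ofFn_succ]; simp

lemma tgtH_cons_succ (H : List 𝒪) {m t : ℕ} (x : 𝒪 × 𝒞) (g : Fin m → 𝒪 × 𝒞)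
    (h : t+1 < m+1) :
    tgtH H (t+1) (Fin.cons x g) h = tgtH (H ++ [x.1]) t g (by omega) := by
  unfold tgtH; rw [List.ofFn_succ, List.append_cons]; rfl

lemma contProb_cons (pol : List 𝒪 → 𝒞 → ℝ) (P : List 𝒪 → 𝒞 → 𝒪 → ℝ)
    (H : List 𝒪) (C : 𝒞) {m : ℕ} (x : 𝒪 × 𝒞) (g : Fin m → 𝒪 × 𝒞) :
    contProb pol P H C (List.ofFn (Fin.cons x g)) =
      P H C x.1 * pol (H ++ [x.1]) x.2 *
        contProb pol P (H ++ [x.1]) x.2 (List.ofFn g) := by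
  obtain ⟨o', C'⟩ := x
  rw [List.ofFn_succ]
  simp [contProb]

lemma contProb_sum_one (pol : List 𝒪 → 𝒞 → ℝ) (P : List 𝒪 → 𝒞 → 𝒪 → ℝ)
    (hsum : ∀ H, ∑ C : 𝒞, pol H C = 1) (hP_sum : ∀ H C, ∑ o' : 𝒪, P H C o' = 1) :
    ∀ (m : ℕ) (H : List 𝒪) (C : 𝒞),
      ∑ f : Fin m → 𝒪 × 𝒞, contProb pol P H C (List.ofFn f) = 1 := by
  intro m
  induction m with
  | zero => intro H C; simp [contProb, List.ofFn_zero]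
  | succ m ih =>
    intro H C
    rw [sum_fn_succ]
    simp only [contProb_cons]
    have : ∀ x : 𝒪 × 𝒞, ∑ g : Fin m → 𝒪 × 𝒞,
        P H C x.1 * pol (H ++ [x.1]) x.2 * contProb pol P (H ++ [x.1]) x.2 (List.ofFn g)
        = P H C x.1 * pol (H ++ [x.1]) x.2 := by
      intro x
      rw [← Finset.mul_sum, ih, mul_one]
    rw [Finset.sum_congr rfl fun x _ => this x, Fintype.sum_prod_type]
    simp only [← Finset.mul_sum]
    simp [hsum, hP_sum]

lemma Qfun_eq (pol : List 𝒪 → 𝒞 → ℝ) (P : List 𝒪 → 𝒞 → 𝒪 → ℝ) (r : 𝒪 → ℝ) (l : ℝ)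
    (m : ℕ) (H : List 𝒪) (o : 𝒪) (C : 𝒞) :
    Qfun pol P r l m H o C = r o + ∑ f : Fin m → 𝒪 × 𝒞,
      contProb pol P H C (List.ofFn f) * futReward r l (obsL f) := rfl

/-- evaluation of an "affine in future-reward" rollout sum -/
lemma roll_eval {M : Type*} [AddCommGroup M] [Module ℝ M]
    (pol : List 𝒪 → 𝒞 → ℝ) (P : List 𝒪 → 𝒞 → 𝒪 → ℝ)
    (hsum : ∀ H, ∑ C : 𝒞, pol H C = 1) (hP_sum : ∀ H C, ∑ o' : 𝒪, P H C o' = 1)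
    (r : 𝒪 → ℝ) (l : ℝ) (m : ℕ) (H : List 𝒪) (C : 𝒞) (x y : ℝ) (u : M) :
    ∑ f : Fin m → 𝒪 × 𝒞, contProb pol P H C (List.ofFn f) •
        ((x + y * futReward r l (obsL f)) • u)
      = (x + y * ∑ f : Fin m → 𝒪 × 𝒞,
          contProb pol P H C (List.ofFn f) * futReward r l (obsL f)) • u := by
  simp only [smul_smul]
  rw [← Finset.sum_smul]
  congr 1
  have h1 : ∀ f : Fin m → 𝒪 × 𝒞,
      contProb pol P H C (List.ofFn f) * (x + y * futReward r l (obsL f))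
      = x * contProb pol P H C (List.ofFn f)
        + y * (contProb pol P H C (List.ofFn f) * futReward r l (obsL f)) := fun f => by ring
  rw [Finset.sum_congr rfl fun f _ => h1 f, Finset.sum_add_distrib, ← Finset.mul_sum,
    ← Finset.mul_sum, contProb_sum_one pol P hsum hP_sum, mul_one]

noncomputable def Lg (polθ : (Fin n → ℝ) → List 𝒪 → 𝒞 → ℝ) (θ : Fin n → ℝ)
    (H : List 𝒪) (C : 𝒞) : (Fin n → ℝ) →L[ℝ] ℝ :=
  fderiv ℝ (fun θ' => Real.log (polθ θ' H C)) θ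

variable {polθ : (Fin n → ℝ) → List 𝒪 → 𝒞 → ℝ}

lemma pol_smul_Lg (hdiff : ∀ H C, Differentiable ℝ (fun θ : Fin n → ℝ => polθ θ H C))
    (hpos : ∀ θ H C, 0 < polθ θ H C) (θ : Fin n → ℝ) (H : List 𝒪) (C : 𝒞) :
    polθ θ H C • Lg polθ θ H C = fderiv ℝ (fun θ' => polθ θ' H C) θ := by
  have h1 : HasFDerivAt (fun θ' => Real.log (polθ θ' H C))
      ((polθ θ H C)⁻¹ • fderiv ℝ (fun θ' => polθ θ' H C) θ) θ :=
    ((hdiff H C θ).hasFDerivAt).log (ne_of_gt (hpos θ H C))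
  rw [Lg, h1.fderiv, smul_smul, mul_inv_cancel₀ (ne_of_gt (hpos θ H C)), one_smul]

lemma vanish (hdiff : ∀ H C, Differentiable ℝ (fun θ : Fin n → ℝ => polθ θ H C))
    (hpos : ∀ θ H C, 0 < polθ θ H C)
    (hsum : ∀ θ (H : List 𝒪), ∑ C : 𝒞, polθ θ H C = 1) (θ : Fin n → ℝ) (H : List 𝒪) :
    ∑ C : 𝒞, polθ θ H C • Lg polθ θ H C = 0 := by
  have : ∀ C ∈ (univ : Finset 𝒞), polθ θ H C • Lg polθ θ H C
      = fderiv ℝ (fun θ' => polθ θ' H C) θ := fun C _ => pol_smul_Lg hdiff hpos θ H C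
  rw [Finset.sum_congr rfl this, ← fderiv_fun_sum (fun C _ => (hdiff H C θ))]
  have h2 : (fun θ' => ∑ C : 𝒞, polθ θ' H C) = fun _ => (1:ℝ) := funext fun θ' => hsum θ' H
  rw [h2, fderiv_fun_const]
  rfl

section Key

variable (hdiff : ∀ H C, Differentiable ℝ (fun θ : Fin n → ℝ => polθ θ H C))
  (hpos : ∀ θ H C, 0 < polθ θ H C)
  (hsum : ∀ θ (H : List 𝒪), ∑ C : 𝒞, polθ θ H C = 1)
  (P : List 𝒪 → 𝒞 → 𝒪 → ℝ) (hP_sum : ∀ H C, ∑ o' : 𝒪, P H C o' = 1)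
  (r : 𝒪 → ℝ) (l : ℝ) (θ : Fin n → ℝ)

include hdiff hpos hsum hP_sum in
lemma key0 (b : ℕ) (H : List 𝒪) (C : 𝒞) (past c : ℝ) :
    ∑ f : Fin (b+1) → 𝒪 × 𝒞, contProb (polθ θ) P H C (List.ofFn f) •
      ((past + c * futReward r l (obsL f)) •
        Lg polθ θ (tgtH H 0 f (Nat.succ_pos b)) (tgtA 0 f (Nat.succ_pos b)))
    = ∑ f : Fin (b+1) → 𝒪 × 𝒞, contProb (polθ θ) P H C (List.ofFn f) •
      ((c * l ^ (0+1) * Qfun (polθ θ) P r l b (tgtH H 0 f (Nat.succ_pos b))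
          (tgtO 0 f (Nat.succ_pos b)) (tgtA 0 f (Nat.succ_pos b))) •
        Lg polθ θ (tgtH H 0 f (Nat.succ_pos b)) (tgtA 0 f (Nat.succ_pos b))) := by
  rw [sum_fn_succ, sum_fn_succ]
  simp only [contProb_cons, obsL_cons, tgtH_cons_zero, tgtO_cons_zero, tgtA_cons_zero,
    futReward, smul_smul]
  have inner : ∀ x : 𝒪 × 𝒞,
      ∑ g : Fin b → 𝒪 × 𝒞,
        (P H C x.1 * polθ θ (H ++ [x.1]) x.2 * contProb (polθ θ) P (H ++ [x.1]) x.2 (List.ofFn g)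
          * (past + c * (l * (r x.1 + futReward r l (obsL g)))))
      = (past + c * l * r x.1
          + c * l * (Qfun (polθ θ) P r l b (H ++ [x.1]) x.1 x.2 - r x.1))
            * (P H C x.1 * polθ θ (H ++ [x.1]) x.2) := by
    intro x
    have h1 : ∀ g : Fin b → 𝒪 × 𝒞,
        P H C x.1 * polθ θ (H ++ [x.1]) x.2 * contProb (polθ θ) P (H ++ [x.1]) x.2 (List.ofFn g)
          * (past + c * (l * (r x.1 + futReward r l (obsL g))))
        = (contProb (polθ θ) P (H ++ [x.1]) x.2 (List.ofFn g)
            * ((past + c * l * r x.1) + (c * l) * futReward r l (obsL g)))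
            * (P H C x.1 * polθ θ (H ++ [x.1]) x.2) := fun g => by ring
    rw [Finset.sum_congr rfl fun g _ => h1 g, ← Finset.sum_mul]
    congr 1
    have h2 : ∀ g : Fin b → 𝒪 × 𝒞,
        contProb (polθ θ) P (H ++ [x.1]) x.2 (List.ofFn g)
            * ((past + c * l * r x.1) + (c * l) * futReward r l (obsL g))
        = (past + c * l * r x.1) * contProb (polθ θ) P (H ++ [x.1]) x.2 (List.ofFn g)
          + (c * l) * (contProb (polθ θ) P (H ++ [x.1]) x.2 (List.ofFn g)
              * futReward r l (obsL g)) := fun g => by ring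
    rw [Finset.sum_congr rfl fun g _ => h2 g, Finset.sum_add_distrib, ← Finset.mul_sum,
      ← Finset.mul_sum, contProb_sum_one (polθ θ) P (hsum θ) hP_sum, mul_one]
    have h3 : ∑ g : Fin b → 𝒪 × 𝒞,
        contProb (polθ θ) P (H ++ [x.1]) x.2 (List.ofFn g) * futReward r l (obsL g)
        = Qfun (polθ θ) P r l b (H ++ [x.1]) x.1 x.2 - r x.1 := by
      rw [Qfun_eq]; ring
    rw [h3]
  have innerR : ∀ x : 𝒪 × 𝒞,
      ∑ g : Fin b → 𝒪 × 𝒞,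
        (P H C x.1 * polθ θ (H ++ [x.1]) x.2 * contProb (polθ θ) P (H ++ [x.1]) x.2 (List.ofFn g)
          * (c * l ^ (0+1) * Qfun (polθ θ) P r l b (H ++ [x.1]) x.1 x.2))
      = (c * l ^ (0+1) * Qfun (polθ θ) P r l b (H ++ [x.1]) x.1 x.2)
          * (P H C x.1 * polθ θ (H ++ [x.1]) x.2) := by
    intro x
    have h1 : ∀ g : Fin b → 𝒪 × 𝒞,
        P H C x.1 * polθ θ (H ++ [x.1]) x.2 * contProb (polθ θ) P (H ++ [x.1]) x.2 (List.ofFn g)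
          * (c * l ^ (0+1) * Qfun (polθ θ) P r l b (H ++ [x.1]) x.1 x.2)
        = contProb (polθ θ) P (H ++ [x.1]) x.2 (List.ofFn g)
            * ((c * l ^ (0+1) * Qfun (polθ θ) P r l b (H ++ [x.1]) x.1 x.2)
              * (P H C x.1 * polθ θ (H ++ [x.1]) x.2)) := fun g => by ring
    rw [Finset.sum_congr rfl fun g _ => h1 g, ← Finset.sum_mul,
      contProb_sum_one (polθ θ) P (hsum θ) hP_sum, one_mul]
  calc ∑ x : 𝒪 × 𝒞, ∑ g : Fin b → 𝒪 × 𝒞,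
        (P H C x.1 * polθ θ (H ++ [x.1]) x.2 * contProb (polθ θ) P (H ++ [x.1]) x.2 (List.ofFn g)
          * (past + c * (l * (r x.1 + futReward r l (obsL g)))))
          • Lg polθ θ (H ++ [x.1]) x.2
      = ∑ x : 𝒪 × 𝒞,
          ((past + c * l * r x.1
            + c * l * (Qfun (polθ θ) P r l b (H ++ [x.1]) x.1 x.2 - r x.1))
            * (P H C x.1 * polθ θ (H ++ [x.1]) x.2)) • Lg polθ θ (H ++ [x.1]) x.2 := by
        refine Finset.sum_congr rfl fun x _ => ?_
        rw [← Finset.sum_smul, inner x]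
    _ = ∑ x : 𝒪 × 𝒞,
          ((past * P H C x.1) • (polθ θ (H ++ [x.1]) x.2 • Lg polθ θ (H ++ [x.1]) x.2)
            + ((c * l ^ (0+1) * Qfun (polθ θ) P r l b (H ++ [x.1]) x.1 x.2)
                * (P H C x.1 * polθ θ (H ++ [x.1]) x.2)) • Lg polθ θ (H ++ [x.1]) x.2) := by
        refine Finset.sum_congr rfl fun x _ => ?_
        rw [smul_smul, ← add_smul]
        congr 1
        ring
    _ = ∑ x : 𝒪 × 𝒞,
          ((c * l ^ (0+1) * Qfun (polθ θ) P r l b (H ++ [x.1]) x.1 x.2)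
            * (P H C x.1 * polθ θ (H ++ [x.1]) x.2)) • Lg polθ θ (H ++ [x.1]) x.2 := by
        rw [Finset.sum_add_distrib]
        have hz : ∑ x : 𝒪 × 𝒞,
            (past * P H C x.1) • (polθ θ (H ++ [x.1]) x.2 • Lg polθ θ (H ++ [x.1]) x.2) = 0 := by
          rw [Fintype.sum_prod_type]
          refine Finset.sum_eq_zero fun o' _ => ?_
          dsimp only
          rw [← Finset.smul_sum]
          rw [vanish hdiff hpos hsum θ (H ++ [o'])]
          exact smul_zero _
        rw [hz, zero_add]
    _ = ∑ x : 𝒪 × 𝒞, ∑ g : Fin b → 𝒪 × 𝒞,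
        (P H C x.1 * polθ θ (H ++ [x.1]) x.2 * contProb (polθ θ) P (H ++ [x.1]) x.2 (List.ofFn g)
          * (c * l ^ (0+1) * Qfun (polθ θ) P r l b (H ++ [x.1]) x.1 x.2))
          • Lg polθ θ (H ++ [x.1]) x.2 := by
        refine Finset.sum_congr rfl fun x _ => ?_
        rw [← Finset.sum_smul, innerR x]

include hdiff hpos hsum hP_sum in
lemma keyS (t : ℕ)
    (IH : ∀ (b : ℕ) (H : List 𝒪) (C : 𝒞) (past c : ℝ),
      ∑ f : Fin (b+t+1) → 𝒪 × 𝒞, contProb (polθ θ) P H C (List.ofFn f) •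
        ((past + c * futReward r l (obsL f)) •
          Lg polθ θ (tgtH H t f (by omega)) (tgtA t f (by omega)))
      = ∑ f : Fin (b+t+1) → 𝒪 × 𝒞, contProb (polθ θ) P H C (List.ofFn f) •
        ((c * l ^ (t+1) * Qfun (polθ θ) P r l b (tgtH H t f (by omega)) (tgtO t f (by omega))
            (tgtA t f (by omega))) •
          Lg polθ θ (tgtH H t f (by omega)) (tgtA t f (by omega))))
    (b : ℕ) (H : List 𝒪) (C : 𝒞) (past c : ℝ) :
    ∑ f : Fin (b+t+1+1) → 𝒪 × 𝒞, contProb (polθ θ) P H C (List.ofFn f) •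
      ((past + c * futReward r l (obsL f)) •
        Lg polθ θ (tgtH H (t+1) f (by omega)) (tgtA (t+1) f (by omega)))
    = ∑ f : Fin (b+t+1+1) → 𝒪 × 𝒞, contProb (polθ θ) P H C (List.ofFn f) •
      ((c * l ^ (t+1+1) * Qfun (polθ θ) P r l b (tgtH H (t+1) f (by omega))
          (tgtO (t+1) f (by omega)) (tgtA (t+1) f (by omega))) •
        Lg polθ θ (tgtH H (t+1) f (by omega)) (tgtA (t+1) f (by omega))) := by
  rw [sum_fn_succ, sum_fn_succ]
  simp only [contProb_cons, obsL_cons, tgtH_cons_succ, tgtO_cons_succ, tgtA_cons_succ, futReward]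
  refine Finset.sum_congr rfl fun x _ => ?_
  have stepL : ∀ g : Fin (b+t+1) → 𝒪 × 𝒞,
      (P H C x.1 * polθ θ (H ++ [x.1]) x.2
          * contProb (polθ θ) P (H ++ [x.1]) x.2 (List.ofFn g))
        • ((past + c * (l * (r x.1 + futReward r l (obsL g)))) •
            Lg polθ θ (tgtH (H ++ [x.1]) t g (by omega)) (tgtA t g (by omega)))
      = (P H C x.1 * polθ θ (H ++ [x.1]) x.2) •
          (contProb (polθ θ) P (H ++ [x.1]) x.2 (List.ofFn g) •
            (((past + c * l * r x.1) + (c * l) * futReward r l (obsL g)) •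
              Lg polθ θ (tgtH (H ++ [x.1]) t g (by omega)) (tgtA t g (by omega)))) := by
    intro g; simp only [smul_smul]; congr 1; ring
  rw [Finset.sum_congr rfl fun g _ => stepL g, ← Finset.smul_sum,
    IH b (H ++ [x.1]) x.2 (past + c * l * r x.1) (c * l), Finset.smul_sum]
  refine Finset.sum_congr rfl fun g _ => ?_
  simp only [smul_smul]
  congr 1
  ring

include hdiff hpos hsum hP_sum in
lemma key (t : ℕ) : ∀ (b : ℕ) (H : List 𝒪) (C : 𝒞) (past c : ℝ),
    ∑ f : Fin (b+t+1) → 𝒪 × 𝒞, contProb (polθ θ) P H C (List.ofFn f) •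
      ((past + c * futReward r l (obsL f)) •
        Lg polθ θ (tgtH H t f (by omega)) (tgtA t f (by omega)))
    = ∑ f : Fin (b+t+1) → 𝒪 × 𝒞, contProb (polθ θ) P H C (List.ofFn f) •
      ((c * l ^ (t+1) * Qfun (polθ θ) P r l b (tgtH H t f (by omega)) (tgtO t f (by omega))
          (tgtA t f (by omega))) •
        Lg polθ θ (tgtH H t f (by omega)) (tgtA t f (by omega))) := by
  induction t with
  | zero =>
    intro b H C past c
    exact key0 hdiff hpos hsum P hP_sum r l θ b H C past c
  | succ t ih =>
    intro b H C past c
    exact keyS hdiff hpos hsum P hP_sum r l θ t ih b H C past c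

end Key


lemma contProb_cons' (pol : List 𝒪 → 𝒞 → ℝ) (P : List 𝒪 → 𝒞 → 𝒪 → ℝ)
    (H : List 𝒪) (C : 𝒞) (x : 𝒪 × 𝒞) (rest : List (𝒪 × 𝒞)) :
    contProb pol P H C (x :: rest) =
      P H C x.1 * pol (H ++ [x.1]) x.2 * contProb pol P (H ++ [x.1]) x.2 rest := by
  obtain ⟨o', C'⟩ := x; rfl

/-- previous action before future step j -/
def prevA (C : 𝒞) (fn : ℕ → 𝒪 × 𝒞) : ℕ → 𝒞
  | 0 => C
  | j+1 => (fn j).2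

lemma prevA_shift (fn : ℕ → 𝒪 × 𝒞) (j : ℕ) :
    prevA (fn 0).2 (fun i => fn (i+1)) j = (fn j).2 := by
  cases j <;> rfl

/-- history after j future steps -/
def preH (H : List 𝒪) (fn : ℕ → 𝒪 × 𝒞) (j : ℕ) : List 𝒪 :=
  H ++ List.ofFn (fun i : Fin j => (fn i.1).1)

lemma preH_zero (H : List 𝒪) (fn : ℕ → 𝒪 × 𝒞) : preH H fn 0 = H := by
  simp [preH]

lemma preH_one (H : List 𝒪) (fn : ℕ → 𝒪 × 𝒞) : preH H fn 1 = H ++ [(fn 0).1] := by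
  simp [preH]

lemma preH_shift (H : List 𝒪) (fn : ℕ → 𝒪 × 𝒞) (j : ℕ) :
    preH (H ++ [(fn 0).1]) (fun i => fn (i+1)) j = preH H fn (j+1) := by
  unfold preH
  conv_rhs => rw [List.ofFn_succ, List.append_cons]
  rfl

lemma CP (pol : List 𝒪 → 𝒞 → ℝ) (P : List 𝒪 → 𝒞 → 𝒪 → ℝ) :
    ∀ (m : ℕ) (H : List 𝒪) (C : 𝒞) (fn : ℕ → 𝒪 × 𝒞),
    contProb pol P H C (List.ofFn fun j : Fin m => fn j.1)
    = ∏ j : Fin m, (P (preH H fn j.1) (prevA C fn j.1) (fn j.1).1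
        * pol (preH H fn (j.1+1)) (fn j.1).2) := by
  intro m
  induction m with
  | zero => intros; simp [contProb]
  | succ m ih =>
    intro H C fn
    rw [List.ofFn_succ, contProb_cons']
    simp only [Fin.val_zero, Fin.val_succ]
    rw [ih (H ++ [(fn 0).1]) (fn 0).2 (fun i => fn (i+1))]
    rw [Fin.prod_univ_succ]
    simp only [Fin.val_zero, Fin.val_succ]
    rw [preH_zero, preH_one]
    have hfac : ∀ j : Fin m,
        P (preH (H ++ [(fn 0).1]) (fun i => fn (i+1)) j.1)
            (prevA (fn 0).2 (fun i => fn (i+1)) j.1) ((fn (j.1+1)).1)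
          * pol (preH (H ++ [(fn 0).1]) (fun i => fn (i+1)) (j.1+1)) ((fn (j.1+1)).2)
        = P (preH H fn (j.1+1)) (prevA C fn (j.1+1)) ((fn (j.1+1)).1)
          * pol (preH H fn (j.1+1+1)) ((fn (j.1+1)).2) := by
      intro j
      rw [preH_shift, preH_shift, prevA_shift]
      rfl
    rw [Finset.prod_congr rfl fun j _ => hfac j]
    have hpA : prevA C fn 0 = C := rfl
    rw [hpA]

lemma cons_eq_prevA {m : ℕ} (c : 𝒞) (fn : ℕ → 𝒪 × 𝒞) (k : Fin (m+1)) :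
    (Fin.cons c (fun j : Fin m => (fn j.1).2) : Fin (m+1) → 𝒞) k = prevA c fn k.1 := by
  rcases k with ⟨kv, hk⟩
  cases kv with
  | zero => rfl
  | succ i => rfl

lemma hist_cons {m : ℕ} (o : 𝒪) (g : Fin m → 𝒪) (k : Fin (m+1)) :
    hist (Fin.cons o g) k = o :: List.ofFn (fun i : Fin k.1 =>
      g ⟨i.1, Nat.lt_of_lt_of_le i.2 (Nat.lt_succ_iff.mp k.2)⟩) := by
  unfold hist
  rw [List.ofFn_succ]
  rfl

lemma hist_cons_preH {m : ℕ} (o : 𝒪) (fn : ℕ → 𝒪 × 𝒞) (k : Fin (m+1)) :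
    hist (Fin.cons o (fun j : Fin m => (fn j.1).1)) k = preH [o] fn k.1 := by
  rw [hist_cons]
  rfl

lemma trajProb_cons (pol : List 𝒪 → 𝒞 → ℝ) (P : List 𝒪 → 𝒞 → 𝒪 → ℝ) (ρ : 𝒪 → ℝ)
    {m : ℕ} (o : 𝒪) (c : 𝒞) (fn : ℕ → 𝒪 × 𝒞) (h0 : 0 < m+1) :
    trajProb h0 pol P ρ
      (Fin.cons o (fun j : Fin m => (fn j.1).1), Fin.cons c (fun j : Fin m => (fn j.1).2))
    = ρ o * (pol [o] c * contProb pol P [o] c (List.ofFn fun j : Fin m => fn j.1)) := by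
  unfold trajProb
  dsimp only
  rw [CP pol P m [o] c fn]
  have hρ : (Fin.cons o (fun j : Fin m => (fn j.1).1) : Fin (m+1) → 𝒪) ⟨0, h0⟩ = o := rfl
  rw [hρ]
  -- policy product
  have tail : ∏ i : Fin m, pol (hist (Fin.cons o fun j : Fin m => (fn j.1).1) i.succ)
      ((Fin.cons c (fun j : Fin m => (fn j.1).2) : Fin (m+1) → 𝒞) i.succ)
      = ∏ j : Fin m, pol (preH [o] fn (j.1+1)) ((fn j.1).2) := by
    refine Finset.prod_congr rfl fun j _ => ?_
    rw [hist_cons_preH o fn j.succ, cons_eq_prevA c fn j.succ]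
    simp only [Fin.val_succ]
    rfl
  rw [Fin.prod_univ_succ, tail]
  -- transition product
  have hP : (∏ k : Fin (m+1),
      if h : k.1 + 1 < m+1 then
        P (hist (Fin.cons o fun j : Fin m => (fn j.1).1) k)
          ((Fin.cons c (fun j : Fin m => (fn j.1).2) : Fin (m+1) → 𝒞) k)
          ((Fin.cons o (fun j : Fin m => (fn j.1).1) : Fin (m+1) → 𝒪) ⟨k.1+1, h⟩)
      else 1)
      = ∏ j : Fin m, P (preH [o] fn j.1) (prevA c fn j.1) ((fn j.1).1) := by
    rw [Fin.prod_univ_castSucc]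
    have hlast : (if h : (Fin.last m).1 + 1 < m+1 then
        P (hist (Fin.cons o fun j : Fin m => (fn j.1).1) (Fin.last m))
          ((Fin.cons c (fun j : Fin m => (fn j.1).2) : Fin (m+1) → 𝒞) (Fin.last m))
          ((Fin.cons o (fun j : Fin m => (fn j.1).1) : Fin (m+1) → 𝒪) ⟨(Fin.last m).1+1, h⟩)
      else 1) = 1 := by
      rw [dif_neg]
      simp [Fin.last]
    rw [hlast, mul_one]
    refine Finset.prod_congr rfl fun j _ => ?_
    rw [dif_pos (show (j.castSucc : Fin (m+1)).1 + 1 < m + 1 by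
      simp only [Fin.coe_castSucc]; omega)]
    rw [hist_cons_preH o fn j.castSucc, cons_eq_prevA c fn j.castSucc]
    simp only [Fin.coe_castSucc]
    rfl
  rw [hP, Finset.prod_mul_distrib]
  have hhead : pol (hist (Fin.cons o fun j : Fin m => (fn j.1).1) 0)
      ((Fin.cons c (fun j : Fin m => (fn j.1).2) : Fin (m+1) → 𝒞) 0) = pol [o] c := rfl
  rw [hhead]
  ring

lemma cons_mk_zero {X : Type*} {m : ℕ} (x : X) (g : Fin m → X) (h : 0 < m+1) :
    (Fin.cons x g : Fin (m+1) → X) ⟨0, h⟩ = x := rfl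

lemma futReward_ofFn (r : 𝒪 → ℝ) (l : ℝ) :
    ∀ (m : ℕ) (g : Fin m → 𝒪),
      futReward r l (List.ofFn g) = ∑ j : Fin m, l ^ (j.1+1) * r (g j) := by
  intro m
  induction m with
  | zero => intro g; simp [futReward]
  | succ m ih =>
    intro g
    rw [List.ofFn_succ]
    show l * (r (g 0) + futReward r l _) = _
    rw [ih, Fin.sum_univ_succ]
    simp only [Fin.val_succ, Fin.val_zero, pow_succ]
    rw [mul_add, Finset.mul_sum]
    congr 1
    · ring
    · exact Finset.sum_congr rfl fun j _ => by ring

def trajEquiv (𝒪 𝒞 : Type*) (m : ℕ) :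
    ((𝒪 × 𝒞) × (Fin m → 𝒪 × 𝒞)) ≃ ((Fin (m+1) → 𝒪) × (Fin (m+1) → 𝒞)) where
  toFun x := (Fin.cons x.1.1 fun j => (x.2 j).1, Fin.cons x.1.2 fun j => (x.2 j).2)
  invFun τ := ((τ.1 0, τ.2 0), fun j => (τ.1 j.succ, τ.2 j.succ))
  left_inv := by
    rintro ⟨⟨o, c⟩, f⟩
    simp
  right_inv := by
    rintro ⟨O, C⟩
    refine Prod.ext ?_ ?_ <;> funext i <;> induction i using Fin.cases <;> simp
lemma trajProb_consF (pol : List 𝒪 → 𝒞 → ℝ) (P : List 𝒪 → 𝒞 → 𝒪 → ℝ) (ρ : 𝒪 → ℝ)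
    {m : ℕ} (o : 𝒪) (c : 𝒞) (f : Fin m → 𝒪 × 𝒞) (h0 : 0 < m+1) :
    trajProb h0 pol P ρ
      (Fin.cons o (fun j : Fin m => (f j).1), Fin.cons c (fun j : Fin m => (f j).2))
    = ρ o * (pol [o] c * contProb pol P [o] c (List.ofFn f)) := by
  classical
  set fn : ℕ → 𝒪 × 𝒞 := fun i => if h : i < m then f ⟨i, h⟩ else (o, c) with hfn
  have hj : ∀ j : Fin m, fn j.1 = f j := fun j => by
    simp only [hfn]; rw [dif_pos j.2]
  have h1 : (fun j : Fin m => (f j).1) = fun j => (fn j.1).1 := funext fun j => by rw [hj]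
  have h2 : (fun j : Fin m => (f j).2) = fun j => (fn j.1).2 := funext fun j => by rw [hj]
  have h3 : List.ofFn f = List.ofFn fun j : Fin m => fn j.1 := by
    congr 1; funext j; rw [hj]
  rw [h1, h2, h3, trajProb_cons]

lemma traj_sum {M : Type*} [AddCommMonoid M] (m : ℕ)
    (F : ((Fin (m+1) → 𝒪) × (Fin (m+1) → 𝒞)) → M) :
    ∑ τ : (Fin (m+1) → 𝒪) × (Fin (m+1) → 𝒞), F τ
      = ∑ o : 𝒪, ∑ c : 𝒞, ∑ f : Fin m → 𝒪 × 𝒞,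
        F (Fin.cons o (fun j => (f j).1), Fin.cons c (fun j => (f j).2)) := by
  rw [← (trajEquiv 𝒪 𝒞 m).sum_comp, Fintype.sum_prod_type, Fintype.sum_prod_type]
  rfl

lemma reward_cons (r : 𝒪 → ℝ) (l : ℝ) {m : ℕ} (o : 𝒪) (f : Fin m → 𝒪 × 𝒞) :
    ∑ k : Fin (m+1), l ^ (k.1) * r ((Fin.cons o (fun j => (f j).1) : Fin (m+1) → 𝒪) k)
    = r o + futReward r l (obsL f) := by
  rw [Fin.sum_univ_succ, show obsL f = List.ofFn (fun j => (f j).1) from rfl,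
    futReward_ofFn r l m (fun j => (f j).1)]
  simp only [Fin.val_zero, pow_zero, one_mul, Fin.cons_zero, Fin.val_succ, Fin.cons_succ]

lemma hist_cons_zero {m : ℕ} (o : 𝒪) (g : Fin m → 𝒪) (h : 0 < m+1) :
    hist (Fin.cons o g) ⟨0, h⟩ = [o] := by
  rw [hist_cons]
  rfl

lemma hist_cons_tgtH {m a : ℕ} (o : 𝒪) (f : Fin m → 𝒪 × 𝒞) (h : a+1 < m+1) :
    hist (Fin.cons o (fun j => (f j).1)) ⟨a+1, h⟩ = tgtH [o] a f (by omega) := by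
  rw [hist_cons]
  rfl

lemma cons_mk_succ_fst {m a : ℕ} (o : 𝒪) (f : Fin m → 𝒪 × 𝒞) (h : a+1 < m+1) :
    (Fin.cons o (fun j => (f j).1) : Fin (m+1) → 𝒪) ⟨a+1, h⟩ = tgtO a f (by omega) := rfl

lemma cons_mk_succ_snd {m a : ℕ} (c : 𝒞) (f : Fin m → 𝒪 × 𝒞) (h : a+1 < m+1) :
    (Fin.cons c (fun j => (f j).2) : Fin (m+1) → 𝒞) ⟨a+1, h⟩ = tgtA a f (by omega) := rfl

lemma roll_eval' (pol : List 𝒪 → 𝒞 → ℝ) (P : List 𝒪 → 𝒞 → 𝒪 → ℝ)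
    (hsum : ∀ H, ∑ C : 𝒞, pol H C = 1) (hP_sum : ∀ H C, ∑ o' : 𝒪, P H C o' = 1)
    (r : 𝒪 → ℝ) (l : ℝ) (m : ℕ) (H : List 𝒪) (C : 𝒞) (x y : ℝ) :
    ∑ f : Fin m → 𝒪 × 𝒞, contProb pol P H C (List.ofFn f) * (x + y * futReward r l (obsL f))
    = x + y * ∑ f : Fin m → 𝒪 × 𝒞,
        contProb pol P H C (List.ofFn f) * futReward r l (obsL f) := by
  have h1 : ∀ f : Fin m → 𝒪 × 𝒞,
      contProb pol P H C (List.ofFn f) * (x + y * futReward r l (obsL f))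
      = x * contProb pol P H C (List.ofFn f)
        + y * (contProb pol P H C (List.ofFn f) * futReward r l (obsL f)) := fun f => by ring
  rw [Finset.sum_congr rfl fun f _ => h1 f, Finset.sum_add_distrib, ← Finset.mul_sum,
    ← Finset.mul_sum, contProb_sum_one pol P hsum hP_sum, mul_one]

section Final

variable (hdiff : ∀ H C, Differentiable ℝ (fun θ : Fin n → ℝ => polθ θ H C))
  (hpos : ∀ θ H C, 0 < polθ θ H C)
  (hsum : ∀ θ (H : List 𝒪), ∑ C : 𝒞, polθ θ H C = 1)
  (P : List 𝒪 → 𝒞 → 𝒪 → ℝ) (hP_sum : ∀ H C, ∑ o' : 𝒪, P H C o' = 1)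
  (ρ : 𝒪 → ℝ) (r : 𝒪 → ℝ) (l : ℝ) (θ : Fin n → ℝ)

include hdiff hpos hsum hP_sum in
lemma final_zero {m : ℕ} (hT : 0 < m+1) (ha : 0 < m+1) :
    ∑ τ : (Fin (m+1) → 𝒪) × (Fin (m+1) → 𝒞), trajProb hT (polθ θ) P ρ τ •
        ((∑ k : Fin (m+1), l ^ (k.1) * r (τ.1 k)) •
          Lg polθ θ (hist τ.1 ⟨0, ha⟩) (τ.2 ⟨0, ha⟩))
    = ∑ τ : (Fin (m+1) → 𝒪) × (Fin (m+1) → 𝒞), trajProb hT (polθ θ) P ρ τ •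
        ((l ^ (0:ℕ) * Qfun (polθ θ) P r l m (hist τ.1 ⟨0, ha⟩) (τ.1 ⟨0, ha⟩) (τ.2 ⟨0, ha⟩)) •
          Lg polθ θ (hist τ.1 ⟨0, ha⟩) (τ.2 ⟨0, ha⟩)) := by
  rw [traj_sum, traj_sum]
  refine Finset.sum_congr rfl fun o _ => Finset.sum_congr rfl fun c _ => ?_
  simp only [trajProb_consF, reward_cons, hist_cons_zero, cons_mk_zero, smul_smul]
  rw [← Finset.sum_smul, ← Finset.sum_smul]
  congr 1
  have e1 : ∀ f : Fin m → 𝒪 × 𝒞,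
      ρ o * (polθ θ [o] c * contProb (polθ θ) P [o] c (List.ofFn f))
        * (r o + futReward r l (obsL f))
      = contProb (polθ θ) P [o] c (List.ofFn f) * (r o + 1 * futReward r l (obsL f))
          * (ρ o * polθ θ [o] c) := fun f => by ring
  have e2 : ∀ f : Fin m → 𝒪 × 𝒞,
      ρ o * (polθ θ [o] c * contProb (polθ θ) P [o] c (List.ofFn f))
        * (l ^ (0:ℕ) * Qfun (polθ θ) P r l m [o] o c)
      = contProb (polθ θ) P [o] c (List.ofFn f)
          * (l ^ (0:ℕ) * Qfun (polθ θ) P r l m [o] o c * (ρ o * polθ θ [o] c)) := fun f => by ring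
  rw [Finset.sum_congr rfl fun f _ => e1 f, Finset.sum_congr rfl fun f _ => e2 f,
    ← Finset.sum_mul, ← Finset.sum_mul,
    roll_eval' (polθ θ) P (hsum θ) hP_sum r l m [o] c (r o) 1,
    contProb_sum_one (polθ θ) P (hsum θ) hP_sum, one_mul]
  have hq : ∑ f : Fin m → 𝒪 × 𝒞,
      contProb (polθ θ) P [o] c (List.ofFn f) * futReward r l (obsL f)
      = Qfun (polθ θ) P r l m [o] o c - r o := by
    rw [Qfun_eq]; ring
  rw [hq]
  ring

include hdiff hpos hsum hP_sum in
lemma final_succ (a b : ℕ) (hT : 0 < b+a+1+1) (ha : a+1 < b+a+1+1) :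
    ∑ τ : (Fin (b+a+1+1) → 𝒪) × (Fin (b+a+1+1) → 𝒞), trajProb hT (polθ θ) P ρ τ •
        ((∑ k : Fin (b+a+1+1), l ^ (k.1) * r (τ.1 k)) •
          Lg polθ θ (hist τ.1 ⟨a+1, ha⟩) (τ.2 ⟨a+1, ha⟩))
    = ∑ τ : (Fin (b+a+1+1) → 𝒪) × (Fin (b+a+1+1) → 𝒞), trajProb hT (polθ θ) P ρ τ •
        ((l ^ (a+1) * Qfun (polθ θ) P r l b (hist τ.1 ⟨a+1, ha⟩) (τ.1 ⟨a+1, ha⟩)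
            (τ.2 ⟨a+1, ha⟩)) •
          Lg polθ θ (hist τ.1 ⟨a+1, ha⟩) (τ.2 ⟨a+1, ha⟩)) := by
  rw [traj_sum, traj_sum]
  refine Finset.sum_congr rfl fun o _ => Finset.sum_congr rfl fun c _ => ?_
  simp only [trajProb_consF, reward_cons, hist_cons_tgtH, cons_mk_succ_fst, cons_mk_succ_snd]
  have e1 : ∀ f : Fin (b+a+1) → 𝒪 × 𝒞,
      (ρ o * (polθ θ [o] c * contProb (polθ θ) P [o] c (List.ofFn f))) •
          ((r o + futReward r l (obsL f)) •
            Lg polθ θ (tgtH [o] a f (by omega)) (tgtA a f (by omega)))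
      = (ρ o * polθ θ [o] c) • (contProb (polθ θ) P [o] c (List.ofFn f) •
          ((r o + 1 * futReward r l (obsL f)) •
            Lg polθ θ (tgtH [o] a f (by omega)) (tgtA a f (by omega)))) := by
    intro f
    simp only [smul_smul]
    congr 1
    ring
  rw [Finset.sum_congr rfl fun f _ => e1 f, ← Finset.smul_sum,
    key hdiff hpos hsum P hP_sum r l θ a b [o] c (r o) 1, Finset.smul_sum]
  refine Finset.sum_congr rfl fun f _ => ?_
  simp only [smul_smul]
  congr 1
  ring

include hdiff hpos in
lemma hasFDerivAt_Jobj {T : ℕ} (hT : 0 < T) :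
    HasFDerivAt (Jobj (𝒪 := 𝒪) (𝒞 := 𝒞) hT polθ P ρ r l)
      (∑ τ : (Fin T → 𝒪) × (Fin T → 𝒞), trajProb hT (polθ θ) P ρ τ •
        ((∑ k : Fin T, l ^ (k.1) * r (τ.1 k)) •
          ∑ k : Fin T, Lg polθ θ (hist τ.1 k) (τ.2 k))) θ := by
  classical
  have hτ : ∀ τ : (Fin T → 𝒪) × (Fin T → 𝒞),
      HasFDerivAt (fun θ' : Fin n → ℝ =>
          trajProb hT (polθ θ') P ρ τ * ∑ k : Fin T, l ^ (k.1) * r (τ.1 k))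
        (trajProb hT (polθ θ) P ρ τ • ((∑ k : Fin T, l ^ (k.1) * r (τ.1 k)) •
          ∑ k : Fin T, Lg polθ θ (hist τ.1 k) (τ.2 k))) θ := by
    intro τ
    have h1 : HasFDerivAt (fun θ' : Fin n → ℝ => ∏ k : Fin T, polθ θ' (hist τ.1 k) (τ.2 k))
        (∑ k : Fin T, (∏ j ∈ Finset.univ.erase k, polθ θ (hist τ.1 j) (τ.2 j)) •
          fderiv ℝ (fun θ' => polθ θ' (hist τ.1 k) (τ.2 k)) θ) θ :=
      HasFDerivAt.finset_prod fun k _ => ((hdiff (hist τ.1 k) (τ.2 k)) θ).hasFDerivAt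
    have h2 := ((h1.const_mul (ρ (τ.1 ⟨0, hT⟩))).mul_const
        (∏ k : Fin T, if h : k.1 + 1 < T then P (hist τ.1 k) (τ.2 k) (τ.1 ⟨k.1+1, h⟩) else 1)).mul_const
        (∑ k : Fin T, l ^ (k.1) * r (τ.1 k))
    refine h2.congr_fderiv ?_
    have hterm : ∀ k : Fin T, (∏ j ∈ Finset.univ.erase k, polθ θ (hist τ.1 j) (τ.2 j)) •
        fderiv ℝ (fun θ' => polθ θ' (hist τ.1 k) (τ.2 k)) θ
        = (∏ j : Fin T, polθ θ (hist τ.1 j) (τ.2 j)) • Lg polθ θ (hist τ.1 k) (τ.2 k) := by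
      intro k
      rw [← pol_smul_Lg hdiff hpos θ (hist τ.1 k) (τ.2 k), smul_smul,
        Finset.prod_erase_mul _ _ (Finset.mem_univ k)]
    rw [Finset.sum_congr rfl fun k _ => hterm k]
    unfold trajProb
    simp only [Finset.smul_sum, smul_smul]
    refine Finset.sum_congr rfl fun k _ => ?_
    congr 1
    ring
  exact HasFDerivAt.fun_sum fun τ _ => hτ τ

end Final

end PG

/-- **Likelihood-ratio policy gradient in Q-function form** (finite-horizon version of
equation (18) in the proof of Theorem 1). In the finite-horizon PoMDP with finite
observation set `𝒪`, finite action set `𝒞`, horizon `T ≥ 1`, positive and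
differentiable-in-`θ` parametrized policy `π_θ(C|H)` summing to one, θ-independent
transition kernel `P`, initial distribution `ρ`, reward `r` and discount `l`: the objective
`J(θ) = ∑_τ Pr_θ[τ] ∑_{k=1}^{T} λ^{k-1} r(O_k)` is differentiable in `θ` and
`∇_θ J(θ) = ∑_τ Pr_θ[τ] ∑_{k=1}^{T} λ^{k-1} Q_θ(H_k,C_k) • ∇_θ log π_θ(C_k|H_k)`. -/
theorem policy_gradient_Q_form
    {𝒪 𝒞 : Type*} [Fintype 𝒪] [Fintype 𝒞] [Nonempty 𝒪] [Nonempty 𝒞]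
    {T : ℕ} (hT : 1 ≤ T) {n : ℕ}
    (polθ : (Fin n → ℝ) → List 𝒪 → 𝒞 → ℝ)
    (hdiff : ∀ (H : List 𝒪) (C : 𝒞), Differentiable ℝ (fun θ : Fin n → ℝ => polθ θ H C))
    (hpos : ∀ (θ : Fin n → ℝ) (H : List 𝒪) (C : 𝒞), 0 < polθ θ H C)
    (hsum : ∀ (θ : Fin n → ℝ) (H : List 𝒪), ∑ C : 𝒞, polθ θ H C = 1)
    (P : List 𝒪 → 𝒞 → 𝒪 → ℝ)
    (hP_nonneg : ∀ (H : List 𝒪) (C : 𝒞) (o' : 𝒪), 0 ≤ P H C o')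
    (hP_sum : ∀ (H : List 𝒪) (C : 𝒞), ∑ o' : 𝒪, P H C o' = 1)
    (ρ : 𝒪 → ℝ) (hρ_nonneg : ∀ o : 𝒪, 0 ≤ ρ o) (hρ_sum : ∑ o : 𝒪, ρ o = 1)
    (r : 𝒪 → ℝ) (l : ℝ) :
    Differentiable ℝ (Jobj (𝒪 := 𝒪) (𝒞 := 𝒞) (T := T) hT polθ P ρ r l) ∧
      ∀ θ : Fin n → ℝ,
        fderiv ℝ (Jobj (𝒪 := 𝒪) (𝒞 := 𝒞) (T := T) hT polθ P ρ r l) θ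
          = ∑ τ : (Fin T → 𝒪) × (Fin T → 𝒞),
              trajProb hT (polθ θ) P ρ τ •
                ∑ k : Fin T,
                  (l ^ (k.1) *
                      Qfun (polθ θ) P r l (T - 1 - k.1) (hist τ.1 k) (τ.1 k) (τ.2 k)) •
                    fderiv ℝ (fun θ' : Fin n → ℝ =>
                      Real.log (polθ θ' (hist τ.1 k) (τ.2 k))) θ  := by
  classical
  obtain ⟨m, rfl⟩ : ∃ m, T = m + 1 := ⟨T - 1, by omega⟩
  have hJ : ∀ θ : Fin n → ℝ, HasFDerivAt (Jobj (𝒪 := 𝒪) (𝒞 := 𝒞) hT polθ P ρ r l)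
      (∑ τ : (Fin (m+1) → 𝒪) × (Fin (m+1) → 𝒞), trajProb hT (polθ θ) P ρ τ •
        ((∑ k : Fin (m+1), l ^ (k.1) * r (τ.1 k)) •
          ∑ k : Fin (m+1), PG.Lg polθ θ (hist τ.1 k) (τ.2 k))) θ :=
    fun θ => PG.hasFDerivAt_Jobj hdiff hpos P ρ r l θ hT
  constructor
  · exact fun θ => (hJ θ).differentiableAt
  · intro θ
    rw [(hJ θ).fderiv]
    simp only [Finset.smul_sum]
    rw [Finset.sum_comm]
    conv_rhs => rw [Finset.sum_comm]
    refine Finset.sum_congr rfl fun k _ => ?_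
    obtain ⟨a, ha⟩ := k
    cases a with
    | zero =>
      exact PG.final_zero hdiff hpos hsum P hP_sum ρ r l θ hT ha
    | succ a =>
      obtain ⟨b, rfl⟩ : ∃ b, m = b + a + 1 := ⟨m - a - 1, by omega⟩
      rw [show ((⟨a+1, ha⟩ : Fin (b+a+1+1)).1) = a + 1 from rfl,
        show b+a+1+1-1-(a+1) = b from by omega]
      exact PG.final_succ hdiff hpos hsum P hP_sum ρ r l θ a b hT ha
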